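/- Let w = (w_1, …, w_n) ∈ ℕⁿ satisfy Σ_{i=1}^n i·w_i = n and w_1 < n, and let S_w = {B ∈ Sym(n,ℝ) : for each i ∈ {1,…,n}, B has exactly w_i distinct eigenvalues of algebraic multiplicity exactly i}. Let A ∈ Sym(n,ℝ) have pairwise distinct eigenvalues λ = (λ_1, …, λ_n) ∈ ℝⁿ. Then inf_{B ∈ S_w} ‖A − B‖ = inf_{μ ∈ M_w} ‖λ − μ‖, where M_w ⊂ ℝⁿ is the set of vectors μ such that for each i ∈ {1,…,n} exactly w_i distinct real values occur exactly i times among the coordinates of μ, and ‖λ − μ‖ is the Euclidean norm on ℝⁿ. -/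
import Mathlib


open MeasureTheory Matrix Polynomial
open scoped Classical ENNReal

noncomputable section

/-- Frobenius norm `‖A‖ = √tr(AᵀA)` on matrices. -/
def frobNorm {n : ℕ} (A : Matrix (Fin n) (Fin n) ℝ) : ℝ :=
  Real.sqrt (Matrix.trace (Aᵀ * A))

/-- The stratum `S_w`: real symmetric matrices having, for each `i ∈ {1,…,n}`
(encoded by `i : Fin n`, multiplicity `i.1 + 1`), exactly `w i` distinct eigenvalues
of algebraic multiplicity exactly `i.1 + 1`. -/
def stratum {n : ℕ} (w : Fin n → ℕ) : Set (Matrix (Fin n) (Fin n) ℝ) :=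
  {B | B.IsSymm ∧ ∀ i : Fin n,
    {μ : ℝ | B.charpoly.rootMultiplicity μ = i.1 + 1}.ncard = w i}

/-- The set `M_w ⊂ ℝⁿ` of vectors such that, for each `i ∈ {1,…,n}`, exactly `w i`
distinct real values occur exactly `i.1 + 1` times among the coordinates. -/
def Mw {n : ℕ} (w : Fin n → ℕ) : Set (Fin n → ℝ) :=
  {μ | ∀ i : Fin n,
    {t : ℝ | (Finset.univ.filter fun j => μ j = t).card = i.1 + 1}.ncard = w i}


lemma charpoly_conj_aux {n : ℕ} (U M V : Matrix (Fin n) (Fin n) ℝ)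
    (hUV : U * V = 1) (hVU : V * U = 1) :
    (U * M * V).charpoly = M.charpoly := by
  have hUV' : U.map C * V.map C = 1 := by
    rw [← Matrix.map_mul, hUV, Matrix.map_one _ (map_zero C) (map_one C)]
  have hVU' : V.map C * U.map C = 1 := by
    rw [← Matrix.map_mul, hVU, Matrix.map_one _ (map_zero C) (map_one C)]
  have hs : (Matrix.scalar (Fin n)) (X : ℝ[X]) = (X : ℝ[X]) • (1 : Matrix (Fin n) (Fin n) ℝ[X]) := by
    ext i j
    simp [Matrix.scalar_apply, Matrix.one_apply, Matrix.smul_apply, Matrix.diagonal, mul_ite]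
  have key : charmatrix (U * M * V) = U.map C * charmatrix M * V.map C := by
    rw [charmatrix, charmatrix, Matrix.mul_sub, Matrix.sub_mul]
    simp only [RingHom.mapMatrix_apply, Matrix.map_mul]
    rw [hs, mul_smul_comm, smul_mul_assoc, mul_one, hUV']
  rw [Matrix.charpoly, Matrix.charpoly, key, Matrix.det_mul, Matrix.det_mul]
  rw [mul_comm, ← mul_assoc, ← Matrix.det_mul, hVU', Matrix.det_one, one_mul]

lemma charpoly_diag {n : ℕ} (d : Fin n → ℝ) :
    (Matrix.diagonal d).charpoly = ∏ i, (X - C (d i)) := by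
  rw [Matrix.charpoly, charmatrix]
  simp only [RingHom.mapMatrix_apply]
  have : (Matrix.scalar (Fin n)) (X : ℝ[X]) - (Matrix.diagonal d).map C
      = Matrix.diagonal (fun i => X - C (d i)) := by
    rw [Matrix.diagonal_map (map_zero C)]
    ext i j
    by_cases h : i = j <;> simp [Matrix.scalar_apply, Matrix.diagonal, h]
  rw [this, Matrix.det_diagonal]

lemma rootMult_prod {n : ℕ} (d : Fin n → ℝ) (μ : ℝ) :
    (∏ i, (X - C (d i))).rootMultiplicity μ = (Finset.univ.filter fun j => d j = μ).card := by
  rw [← Polynomial.count_roots]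
  have : (∏ i : Fin n, (X - C (d i))) = ((Finset.univ.val.map d).map fun a => X - C a).prod := by
    simp only [Multiset.map_map, Finset.prod_eq_multiset_prod, Function.comp]
  rw [this, Polynomial.roots_multiset_prod_X_sub_C, Multiset.count_map]
  rw [show (Finset.filter (fun j => d j = μ) Finset.univ).card
      = Multiset.card (Multiset.filter (fun a => d a = μ) Finset.univ.val) from rfl]
  congr 1
  apply Multiset.filter_congr
  intro a _
  exact eq_comm

/-- charpoly of a real hermitian matrix. -/
lemma charpoly_hermitian {n : ℕ} {B : Matrix (Fin n) (Fin n) ℝ} (hB : B.IsHermitian) :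
    B.charpoly = ∏ i, (X - C (hB.eigenvalues i)) := by
  set U : Matrix (Fin n) (Fin n) ℝ := (hB.eigenvectorUnitary : Matrix (Fin n) (Fin n) ℝ) with hU
  have hspec : B = U * Matrix.diagonal hB.eigenvalues * star U := by
    simpa [RCLike.ofReal_real_eq_id] using hB.spectral_theorem
  have hUV : U * star U = 1 := Unitary.mul_star_self_of_mem hB.eigenvectorUnitary.prop
  have hVU : star U * U = 1 := Unitary.star_mul_self_of_mem hB.eigenvectorUnitary.prop
  have h2 : B.charpoly = (U * Matrix.diagonal hB.eigenvalues * star U).charpoly := by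
    conv_lhs => rw [hspec]
  rw [h2, charpoly_conj_aux _ _ _ hUV hVU, charpoly_diag]

/-- symmetric matrices in terms of `Mw` of their eigenvalues -/
lemma stratum_iff {n : ℕ} (w : Fin n → ℕ) {B : Matrix (Fin n) (Fin n) ℝ}
    (hB : B.IsHermitian) :
    (∀ i : Fin n, {μ : ℝ | B.charpoly.rootMultiplicity μ = i.1 + 1}.ncard = w i)
      ↔ (∀ i : Fin n,
        {t : ℝ | (Finset.univ.filter fun j => hB.eigenvalues j = t).card = i.1 + 1}.ncard = w i) := by
  have h : ∀ μ : ℝ, B.charpoly.rootMultiplicity μ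
      = (Finset.univ.filter fun j => hB.eigenvalues j = μ).card := by
    intro μ; rw [charpoly_hermitian hB, rootMult_prod]
  constructor <;> intro H i <;> [skip; skip] <;>
    · have := H i
      convert this using 2
      ext t
      simp [h]

lemma conj_mul_conj {n : ℕ} (U : Matrix (Fin n) (Fin n) ℝ) (hU : star U * U = 1)
    (P Q : Matrix (Fin n) (Fin n) ℝ) :
    (U * P * star U) * (U * Q * star U) = U * (P * Q) * star U := by
  simp only [mul_assoc]
  rw [← mul_assoc (star U) U, hU, one_mul]

lemma trace_conj {n : ℕ} (U : Matrix (Fin n) (Fin n) ℝ) (hU : star U * U = 1)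
    (W : Matrix (Fin n) (Fin n) ℝ) :
    Matrix.trace (U * W * star U) = Matrix.trace W := by
  rw [mul_assoc, Matrix.trace_mul_comm, mul_assoc, hU, mul_one]

lemma star_conj_diag {n : ℕ} (U : Matrix (Fin n) (Fin n) ℝ) (d : Fin n → ℝ) :
    star (U * Matrix.diagonal d * star U) = U * Matrix.diagonal d * star U := by
  have hd : star (Matrix.diagonal d) = Matrix.diagonal d := by
    rw [Matrix.star_eq_conjTranspose, (Matrix.isHermitian_diagonal d).eq]
  simp only [StarMul.star_mul, star_star, hd, mul_assoc]

lemma transpose_eq_of_star {n : ℕ} {M : Matrix (Fin n) (Fin n) ℝ} (h : star M = M) : Mᵀ = M := by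
  rw [← Matrix.conjTranspose_eq_transpose_of_trivial, ← Matrix.star_eq_conjTranspose, h]

lemma trace_conj_sq {n : ℕ} (U : Matrix (Fin n) (Fin n) ℝ) (d : Fin n → ℝ)
    (hU : star U * U = 1) :
    Matrix.trace ((U * Matrix.diagonal d * star U)ᵀ * (U * Matrix.diagonal d * star U))
      = ∑ i, d i ^ 2 := by
  rw [transpose_eq_of_star (star_conj_diag U d), conj_mul_conj U hU, trace_conj U hU,
    Matrix.diagonal_mul_diagonal, Matrix.trace_diagonal]
  exact Finset.sum_congr rfl fun i _ => (sq (d i)).symm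

lemma trace_prod {n : ℕ} (U V : Matrix (Fin n) (Fin n) ℝ) (lam mu : Fin n → ℝ)
    (hU : star U * U = 1) :
    Matrix.trace ((U * Matrix.diagonal lam * star U) * (V * Matrix.diagonal mu * star V))
      = ∑ i, ∑ j, lam i * mu j * ((star U * V) i j) ^ 2 := by
  set Q := star U * V with hQ
  have hsQ : star V * U = Qᵀ := by
    rw [hQ, ← Matrix.conjTranspose_eq_transpose_of_trivial, Matrix.conjTranspose_mul]
    simp only [Matrix.star_eq_conjTranspose, Matrix.conjTranspose_conjTranspose]
  have h1 : (U * Matrix.diagonal lam * star U) * (V * Matrix.diagonal mu * star V)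
      = U * (Matrix.diagonal lam * Q * Matrix.diagonal mu * star V) := by
    simp only [mul_assoc, hQ]
  rw [h1, Matrix.trace_mul_comm]
  have h2 : Matrix.diagonal lam * Q * Matrix.diagonal mu * star V * U
      = Matrix.diagonal lam * Q * Matrix.diagonal mu * Qᵀ := by
    rw [mul_assoc, hsQ]
  rw [h2, Matrix.trace]
  simp only [Matrix.diag_apply, Matrix.mul_apply, Matrix.transpose_apply,
    Matrix.diagonal_apply, ite_mul, zero_mul, mul_ite, mul_zero,
    Finset.sum_ite_eq, Finset.sum_ite_eq', Finset.mem_univ, if_true]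
  apply Finset.sum_congr rfl
  intro i _
  apply Finset.sum_congr rfl
  intro j _
  ring

lemma exists_perm_bound {n : ℕ} (lam mu : Fin n → ℝ) (Q : Matrix (Fin n) (Fin n) ℝ)
    (hQ1 : Q * Qᵀ = 1) (hQ2 : Qᵀ * Q = 1) :
    ∃ σ : Equiv.Perm (Fin n),
      ∑ i, ∑ j, lam i * mu j * Q i j ^ 2 ≤ ∑ i, lam i * mu (σ i) := by
  have hS : Matrix.of (fun i j => Q i j ^ 2) ∈ doublyStochastic ℝ (Fin n) := by
    rw [mem_doublyStochastic_iff_sum]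
    refine ⟨fun i j => sq_nonneg _, fun i => ?_, fun j => ?_⟩
    · have := congrFun (congrFun hQ1 i) i
      simp only [Matrix.mul_apply, Matrix.transpose_apply, Matrix.one_apply_eq] at this
      simpa [sq] using this
    · have := congrFun (congrFun hQ2 j) j
      simp only [Matrix.mul_apply, Matrix.transpose_apply, Matrix.one_apply_eq] at this
      simpa [sq, mul_comm] using this
  obtain ⟨w, hw0, hw1, hwS⟩ := exists_eq_sum_perm_of_mem_doublyStochastic hS
  set F : Equiv.Perm (Fin n) → ℝ := fun σ => ∑ i, lam i * mu (σ i) with hF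
  have hQij : ∀ i j, Q i j ^ 2 = ∑ σ, w σ * (σ.permMatrix ℝ i j) := by
    intro i j
    have h := congrFun (congrFun hwS i) j
    simpa [Matrix.sum_apply, Matrix.smul_apply] using h.symm
  have hT : ∑ i, ∑ j, lam i * mu j * Q i j ^ 2 = ∑ σ, w σ * F σ := by
    calc ∑ i, ∑ j, lam i * mu j * Q i j ^ 2
        = ∑ i, ∑ σ, ∑ j, lam i * (mu j * (w σ * σ.permMatrix ℝ i j)) := by
          simp only [hQij, Finset.mul_sum, mul_assoc]
          exact Finset.sum_congr rfl fun i _ => Finset.sum_comm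
      _ = ∑ σ, ∑ i, ∑ j, lam i * (mu j * (w σ * σ.permMatrix ℝ i j)) := Finset.sum_comm
      _ = ∑ σ, w σ * F σ := by
          apply Finset.sum_congr rfl; intro σ _
          rw [hF, Finset.mul_sum]
          apply Finset.sum_congr rfl; intro i _
          simp only [Equiv.Perm.permMatrix, PEquiv.toMatrix_apply, Equiv.toPEquiv_apply,
            Option.mem_def, Option.some.injEq, mul_ite, mul_one, mul_zero,
            Finset.sum_ite_eq, Finset.sum_ite_eq', Finset.mem_univ, if_true]
          ring
  rw [hT]
  by_contra hcon
  push_neg at hcon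
  have hpos : ∃ σ, 0 < w σ := by
    by_contra hno
    push_neg at hno
    have : ∑ σ, w σ = 0 := le_antisymm (Finset.sum_nonpos fun σ _ => hno σ)
      (Finset.sum_nonneg fun σ _ => hw0 σ)
    rw [hw1] at this; norm_num at this
  obtain ⟨σ0, hσ0⟩ := hpos
  have hlt : ∑ σ, w σ * F σ < ∑ σ, w σ * (∑ τ, w τ * F τ) := by
    apply Finset.sum_lt_sum
    · intro σ _
      exact mul_le_mul_of_nonneg_left (hcon σ).le (hw0 σ)
    · exact ⟨σ0, Finset.mem_univ _, by
        exact mul_lt_mul_of_pos_left (hcon σ0) hσ0⟩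
  rw [← Finset.sum_mul, hw1, one_mul] at hlt
  exact lt_irrefl _ hlt


lemma Mw_perm {n : ℕ} (w : Fin n → ℕ) (ν : Fin n → ℝ) (σ : Equiv.Perm (Fin n))
    (h : ν ∈ Mw w) : (fun i => ν (σ i)) ∈ Mw w := by
  intro i
  have hst : {t : ℝ | (Finset.univ.filter fun j => ν (σ j) = t).card = i.1 + 1}
      = {t : ℝ | (Finset.univ.filter fun j => ν j = t).card = i.1 + 1} := by
    ext t
    have : (Finset.univ.filter fun j => ν (σ j) = t).card
        = (Finset.univ.filter fun j => ν j = t).card := by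
      apply Finset.card_equiv σ
      intro j
      simp
    simp only [Set.mem_setOf_eq, this]
  simpa [Mw, hst] using h i

lemma hw_key {n : ℕ} {A B : Matrix (Fin n) (Fin n) ℝ} (hA : A.IsHermitian)
    (hB : B.IsHermitian) :
    ∃ σ : Equiv.Perm (Fin n),
      Real.sqrt (∑ i, (hA.eigenvalues i - hB.eigenvalues (σ i)) ^ 2) ≤ frobNorm (A - B) := by
  set lam := hA.eigenvalues with hlam
  set mu := hB.eigenvalues with hmu
  set U : Matrix (Fin n) (Fin n) ℝ := (hA.eigenvectorUnitary : Matrix (Fin n) (Fin n) ℝ) with hU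
  set V : Matrix (Fin n) (Fin n) ℝ := (hB.eigenvectorUnitary : Matrix (Fin n) (Fin n) ℝ) with hV
  have hU1 : U * star U = 1 := Unitary.mul_star_self_of_mem hA.eigenvectorUnitary.prop
  have hU2 : star U * U = 1 := Unitary.star_mul_self_of_mem hA.eigenvectorUnitary.prop
  have hV1 : V * star V = 1 := Unitary.mul_star_self_of_mem hB.eigenvectorUnitary.prop
  have hV2 : star V * V = 1 := Unitary.star_mul_self_of_mem hB.eigenvectorUnitary.prop
  have hAspec : A = U * Matrix.diagonal lam * star U := by
    simpa [RCLike.ofReal_real_eq_id] using hA.spectral_theorem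
  have hBspec : B = V * Matrix.diagonal mu * star V := by
    simpa [RCLike.ofReal_real_eq_id] using hB.spectral_theorem
  set Q := star U * V with hQ
  have hQt : Qᵀ = star Q := by
    rw [← Matrix.conjTranspose_eq_transpose_of_trivial, Matrix.star_eq_conjTranspose]
  have hQ1 : Q * Qᵀ = 1 := by
    rw [hQt, hQ, StarMul.star_mul, star_star]
    calc star U * V * (star V * U) = star U * (V * star V) * U := by
          simp only [mul_assoc]
      _ = 1 := by rw [hV1, mul_one, hU2]
  have hQ2 : Qᵀ * Q = 1 := by
    rw [hQt, hQ, StarMul.star_mul, star_star]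
    calc star V * U * (star U * V) = star V * (U * star U) * V := by
          simp only [mul_assoc]
      _ = 1 := by rw [hU1, mul_one, hV2]
  have e1 : Matrix.trace (Aᵀ * A) = ∑ i, lam i ^ 2 := by
    conv_lhs => rw [hAspec]
    exact trace_conj_sq U lam hU2
  have e2 : Matrix.trace (Bᵀ * B) = ∑ i, mu i ^ 2 := by
    conv_lhs => rw [hBspec]
    exact trace_conj_sq V mu hV2
  have e3 : Matrix.trace (A * B) = ∑ i, ∑ j, lam i * mu j * Q i j ^ 2 := by
    conv_lhs => rw [hAspec, hBspec]
    exact trace_prod U V lam mu hU2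
  have hAt : Aᵀ = A := by
    rw [← Matrix.conjTranspose_eq_transpose_of_trivial, hA.eq]
  have hBt : Bᵀ = B := by
    rw [← Matrix.conjTranspose_eq_transpose_of_trivial, hB.eq]
  have etr : Matrix.trace ((A - B)ᵀ * (A - B))
      = ∑ i, lam i ^ 2 + ∑ i, mu i ^ 2 - 2 * ∑ i, ∑ j, lam i * mu j * Q i j ^ 2 := by
    rw [Matrix.transpose_sub, hAt, hBt, Matrix.sub_mul, Matrix.mul_sub, Matrix.mul_sub,
      Matrix.trace_sub, Matrix.trace_sub, Matrix.trace_sub, Matrix.trace_mul_comm B A]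
    rw [← hAt] at e1
    rw [← hBt] at e2
    rw [hAt] at e1
    rw [hBt] at e2
    rw [e3]
    rw [show Matrix.trace (A * A) = ∑ i, lam i ^ 2 by rw [← e1, hAt]]
    rw [show Matrix.trace (B * B) = ∑ i, mu i ^ 2 by rw [← e2, hBt]]
    ring
  obtain ⟨σ, hσ⟩ := exists_perm_bound lam mu Q hQ1 hQ2
  refine ⟨σ, ?_⟩
  rw [frobNorm]
  apply Real.sqrt_le_sqrt
  have hsum : ∑ i, (lam i - mu (σ i)) ^ 2
      = ∑ i, lam i ^ 2 + ∑ i, mu i ^ 2 - 2 * ∑ i, lam i * mu (σ i) := by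
    have h1 : ∑ i, (lam i - mu (σ i)) ^ 2
        = ∑ i, (lam i ^ 2 + mu (σ i) ^ 2 - 2 * (lam i * mu (σ i))) :=
      Finset.sum_congr rfl fun i _ => by ring
    have h2 : ∑ i, mu (σ i) ^ 2 = ∑ i, mu i ^ 2 :=
      Equiv.sum_comp σ (fun i => mu i ^ 2)
    rw [h1]
    rw [Finset.sum_sub_distrib, Finset.sum_add_distrib, h2, ← Finset.mul_sum]
  rw [hsum, etr]
  linarith

lemma construct_B {n : ℕ} (w : Fin n → ℕ) {A : Matrix (Fin n) (Fin n) ℝ}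
    (hA : A.IsHermitian) {μ : Fin n → ℝ} (hμ : μ ∈ Mw w) :
    ∃ B ∈ stratum w, frobNorm (A - B)
      = Real.sqrt (∑ i, (hA.eigenvalues i - μ i) ^ 2) := by
  set lam := hA.eigenvalues with hlam
  set U : Matrix (Fin n) (Fin n) ℝ := (hA.eigenvectorUnitary : Matrix (Fin n) (Fin n) ℝ) with hU
  have hU1 : U * star U = 1 := Unitary.mul_star_self_of_mem hA.eigenvectorUnitary.prop
  have hU2 : star U * U = 1 := Unitary.star_mul_self_of_mem hA.eigenvectorUnitary.prop
  have hAspec : A = U * Matrix.diagonal lam * star U := by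
    simpa [RCLike.ofReal_real_eq_id] using hA.spectral_theorem
  refine ⟨U * Matrix.diagonal μ * star U, ⟨transpose_eq_of_star (star_conj_diag U μ), ?_⟩, ?_⟩
  · intro i
    have hcp : (U * Matrix.diagonal μ * star U).charpoly = ∏ j, (X - C (μ j)) :=
      (charpoly_conj_aux U (Matrix.diagonal μ) (star U) hU1 hU2).trans (charpoly_diag μ)
    have : {t : ℝ | (U * Matrix.diagonal μ * star U).charpoly.rootMultiplicity t = i.1 + 1}
        = {t : ℝ | (Finset.univ.filter fun j => μ j = t).card = i.1 + 1} := by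
      ext t
      simp [hcp, rootMult_prod]
    rw [this]
    exact hμ i
  · have hdiff : A - U * Matrix.diagonal μ * star U
        = U * Matrix.diagonal (fun i => lam i - μ i) * star U := by
      rw [hAspec, show Matrix.diagonal (fun i => lam i - μ i)
          = Matrix.diagonal lam - Matrix.diagonal μ from (Matrix.diagonal_sub _ _).symm]
      noncomm_ring
    rw [frobNorm, hdiff, trace_conj_sq U _ hU2]

/-- for symmetric `A` with pairwise distinct eigenvalues `λ`,
`inf_{B ∈ S_w} ‖A - B‖ = inf_{μ ∈ M_w} ‖λ - μ‖`. -/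
theorem dist_to_stratum {n : ℕ} (hn : 1 ≤ n) (w : Fin n → ℕ)
    (hw : ∑ i : Fin n, (i.1 + 1) * w i = n) (hw1 : w ⟨0, by omega⟩ < n)
    (A : Matrix (Fin n) (Fin n) ℝ) (hA : A.IsHermitian)
    (hinj : Function.Injective hA.eigenvalues) :
    sInf {r : ℝ | ∃ B ∈ stratum w, r = frobNorm (A - B)} =
      sInf {r : ℝ | ∃ μ ∈ Mw w,
        r = Real.sqrt (∑ i : Fin n, (hA.eigenvalues i - μ i) ^ 2)} := by
  have hbdd1 : BddBelow {r : ℝ | ∃ B ∈ stratum w, r = frobNorm (A - B)} := by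
    refine ⟨0, ?_⟩
    rintro r ⟨B, hB, rfl⟩
    exact Real.sqrt_nonneg _
  have hbdd2 : BddBelow {r : ℝ | ∃ μ ∈ Mw w,
      r = Real.sqrt (∑ i : Fin n, (hA.eigenvalues i - μ i) ^ 2)} := by
    refine ⟨0, ?_⟩
    rintro r ⟨μ, hμ, rfl⟩
    exact Real.sqrt_nonneg _
  have hsub : {r : ℝ | ∃ μ ∈ Mw w,
        r = Real.sqrt (∑ i : Fin n, (hA.eigenvalues i - μ i) ^ 2)}
      ⊆ {r : ℝ | ∃ B ∈ stratum w, r = frobNorm (A - B)} := by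
    rintro r ⟨μ, hμ, rfl⟩
    obtain ⟨B, hB, hBeq⟩ := construct_B w hA hμ
    exact ⟨B, hB, hBeq.symm⟩
  have hex : ∀ r ∈ {r : ℝ | ∃ B ∈ stratum w, r = frobNorm (A - B)},
      ∃ r' ∈ {r : ℝ | ∃ μ ∈ Mw w,
        r = Real.sqrt (∑ i : Fin n, (hA.eigenvalues i - μ i) ^ 2)}, r' ≤ r := by
    rintro r ⟨B, hB, rfl⟩
    have hBH : B.IsHermitian := by
      rw [Matrix.IsHermitian, Matrix.conjTranspose_eq_transpose_of_trivial]
      exact hB.1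
    have hν : hBH.eigenvalues ∈ Mw w := (stratum_iff w hBH).1 hB.2
    obtain ⟨σ, hσ⟩ := hw_key hA hBH
    exact ⟨_, ⟨fun i => hBH.eigenvalues (σ i), Mw_perm w _ σ hν, rfl⟩, hσ⟩
  by_cases hne : {r : ℝ | ∃ B ∈ stratum w, r = frobNorm (A - B)}.Nonempty
  · apply le_antisymm
    · obtain ⟨r, hr⟩ := hne
      obtain ⟨r', hr', _⟩ := hex r hr
      exact csInf_le_csInf hbdd1 ⟨r', hr'⟩ hsub
    · apply le_csInf hne
      rintro r hr
      obtain ⟨r', hr', hle⟩ := hex r hr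
      exact (csInf_le hbdd2 hr').trans hle
  · have h2 : ¬ {r : ℝ | ∃ μ ∈ Mw w,
        r = Real.sqrt (∑ i : Fin n, (hA.eigenvalues i - μ i) ^ 2)}.Nonempty :=
      fun ⟨r, hr⟩ => hne ⟨r, hsub hr⟩
    rw [Set.not_nonempty_iff_eq_empty] at hne h2
    rw [hne, h2]
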